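/- arXiv:0901.3749 — 2 statements merged into one kernel-verified Lean document; each statement's English description precedes it below -/
import Mathlib

section
/- Let p : Σ* → ℝ be a string function with dim p = d < ∞, and suppose x, y ∈ ℝ^d and matrices T_a ∈ ℝ^{d×d} (a ∈ Σ) satisfy p(v = a_1…a_n) = yᵀ T_{a_n}···T_{a_1} x for all v ∈ Σ*. Then span{T_w x : w ∈ Σ*} = ℝ^d, where T_w := T_{b_m}···T_{b_1} for w = b_1…b_m and T_□ := Id. -/
open Matrix

/-- The column `p^w` of the Hankel matrix of `p`, as a function `v ↦ p(wv)`. -/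
def hankelCol {A : Type*} (p : List A → ℝ) (w : List A) : List A → ℝ :=
  fun v => p (w ++ v)

/-- The dimension of a string function: the rank of its Hankel matrix. -/
noncomputable def sfDim {A : Type*} (p : List A → ℝ) : Cardinal :=
  Module.rank ℝ ↥(Submodule.span ℝ (Set.range (hankelCol p)))

/-- For `v = a₁…aₙ`, the product `T_{aₙ} ⋯ T_{a₁}` (with `T_□ = Id`). -/
def wordProd {A R : Type*} [Semiring R] {d : ℕ}
    (T : A → Matrix (Fin d) (Fin d) R) (v : List A) : Matrix (Fin d) (Fin d) R :=
  (v.reverse.map T).prod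

lemma wordProd_append {A R : Type*} [Semiring R] {d : ℕ}
    (T : A → Matrix (Fin d) (Fin d) R) (w v : List A) :
    wordProd T (w ++ v) = wordProd T v * wordProd T w := by
  simp [wordProd, List.reverse_append]

/-- If `dim p = d` and `p(a₁…aₙ) = yᵀ T_{aₙ} ⋯ T_{a₁} x` for all
strings, then `span{T_w x : w ∈ Σ*} = ℝ^d`. -/
theorem stmt18 {A : Type*} [Fintype A] [Nonempty A] (p : List A → ℝ) (d : ℕ)
    (hdim : sfDim p = (d : Cardinal))
    (x y : Fin d → ℝ) (T : A → Matrix (Fin d) (Fin d) ℝ)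
    (h : ∀ v : List A, p v = y ⬝ᵥ (wordProd T v) *ᵥ x) :
    Submodule.span ℝ (Set.range fun w : List A => (wordProd T w) *ᵥ x) = ⊤ := by
  set Φ : (Fin d → ℝ) →ₗ[ℝ] (List A → ℝ) :=
    { toFun := fun z => fun v => y ⬝ᵥ (wordProd T v) *ᵥ z
      map_add' := by
        intro z z'; funext v; simp [Matrix.mulVec_add, dotProduct_add]
      map_smul' := by
        intro c z; funext v; simp [Matrix.mulVec_smul, dotProduct_smul] } with hΦ
  have hcol : hankelCol p = fun w => Φ ((wordProd T w) *ᵥ x) := by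
    funext w v
    simp only [hankelCol, h, hΦ, LinearMap.coe_mk, AddHom.coe_mk]
    rw [wordProd_append, ← Matrix.mulVec_mulVec]
  set S := Submodule.span ℝ (Set.range fun w : List A => (wordProd T w) *ᵥ x) with hS
  have hmap : Submodule.span ℝ (Set.range (hankelCol p)) = S.map Φ := by
    rw [hcol, Submodule.map_span]
    exact congrArg _ (Set.range_comp _ _)
  have hrank : (d : Cardinal) ≤ Module.rank ℝ S := by
    have h1 := lift_rank_map_le Φ S
    rw [← hmap, ← sfDim, hdim] at h1
    simpa using h1
  have hfin : d ≤ Module.finrank ℝ S := by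
    rw [← Module.finrank_eq_rank'] at hrank
    exact_mod_cast hrank
  apply Submodule.eq_top_of_finrank_eq
  have h2 : Module.finrank ℝ S ≤ Module.finrank ℝ (Fin d → ℝ) := Submodule.finrank_le S
  have h3 : Module.finrank ℝ (Fin d → ℝ) = d := Module.finrank_fin_fun ℝ
  omega
end

section
/- Let d ≥ 1, n ≥ 2d−1, and let p be a real-valued function on all strings of length at most n over Σ. Let 1 ≤ d* ≤ d and let v_1,…,v_{d*}, w_1,…,w_{d*} ∈ Σ* be strings of length at most d−1 such that V := [p(w_j v_i)]_{1≤i,j≤d*} ∈ ℝ^{d*×d*} is invertible, and assume that for every w ∈ Σ* with |w| ≤ ⌈n/2⌉ there exist coefficients c_1,…,c_{d*} ∈ ℝ with p(wu) = Σ_{j=1}^{d*} c_j p(w_j u) for every u ∈ Σ* such that |wu| ≤ n and |w_j u| ≤ n for all j. Define W_a := [p(w_j a v_i)]_{1≤i,j≤d*} and T_a := W_a V^{−1} for each a ∈ Σ. Then for all v, w ∈ Σ* with |wv| ≤ ⌈n/2⌉, writing T_v := T_{a_k}···T_{a_1} for v = a_1…a_k, one has T_v (p(w v_1),…,p(w v_{d*}))ᵀ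 = (p(wv v_1),…,p(wv v_{d*}))ᵀ. -/
open Matrix

/-- **Lemma 1 for Theorem on generators.** Let `d ≥ 1`, `n ≥ 2d−1`,
`1 ≤ d* ≤ d`, and let `v₁,…,v_{d*}, w₁,…,w_{d*}` be strings of length `≤ d−1` such that
`V = [p(wⱼ vᵢ)]` is invertible; assume each column `p(w·)` with `|w| ≤ ⌈n/2⌉` is (on the
relevant entries) a linear combination of the columns `p(wⱼ·)`. With
`W_a = [p(wⱼ a vᵢ)]` and `T_a = W_a V⁻¹`: for all `v, w` with `|wv| ≤ ⌈n/2⌉`,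
`T_v (p(w v₁),…,p(w v_{d*}))ᵀ = (p(wv v₁),…,p(wv v_{d*}))ᵀ`. -/
theorem stmt19 {A : Type*} [Fintype A] [Nonempty A] (d n dstar : ℕ)
    (hd : 1 ≤ d) (hn : 2 * d - 1 ≤ n) (hds : 1 ≤ dstar) (hdsd : dstar ≤ d)
    (p : List A → ℝ)
    (vs ws : Fin dstar → List A)
    (hvs : ∀ i, (vs i).length ≤ d - 1) (hws : ∀ j, (ws j).length ≤ d - 1)
    (V : Matrix (Fin dstar) (Fin dstar) ℝ)
    (hV : V = Matrix.of fun i j => p (ws j ++ vs i))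
    (hVunit : IsUnit V.det)
    (hdep : ∀ w : List A, w.length ≤ (n + 1) / 2 →
      ∃ c : Fin dstar → ℝ, ∀ u : List A, (w ++ u).length ≤ n →
        (∀ j, (ws j ++ u).length ≤ n) → p (w ++ u) = ∑ j, c j * p (ws j ++ u))
    (W : A → Matrix (Fin dstar) (Fin dstar) ℝ)
    (hW : ∀ a : A, W a = Matrix.of fun i j => p (ws j ++ [a] ++ vs i))
    (T : A → Matrix (Fin dstar) (Fin dstar) ℝ)
    (hT : ∀ a : A, T a = W a * V⁻¹) :
    ∀ v w : List A, (w ++ v).length ≤ (n + 1) / 2 →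
      (wordProd T v) *ᵥ (fun i => p (w ++ vs i)) =
        fun i => p (w ++ v ++ vs i) := by
  -- key single-letter step
  have key : ∀ (a : A) (w : List A), w.length + 1 ≤ (n + 1) / 2 →
      T a *ᵥ (fun i => p (w ++ vs i)) = fun i => p (w ++ [a] ++ vs i) := by
    intro a w hw
    obtain ⟨c, hc⟩ := hdep w (by omega)
    have hVc : V *ᵥ c = fun i => p (w ++ vs i) := by
      funext i
      have h1 : (w ++ vs i).length ≤ n := by
        have := hvs i; simp [List.length_append]; omega
      have h2 : ∀ j, (ws j ++ vs i).length ≤ n := by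
        intro j; have := hvs i; have := hws j; simp [List.length_append]; omega
      rw [hc (vs i) h1 h2]
      simp [hV, mulVec, dotProduct, mul_comm]
    have hcv : V⁻¹ *ᵥ (fun i => p (w ++ vs i)) = c := by
      rw [← hVc, mulVec_mulVec, Matrix.nonsing_inv_mul V hVunit, one_mulVec]
    rw [hT a, ← mulVec_mulVec, hcv]
    funext i
    have h1 : (w ++ ([a] ++ vs i)).length ≤ n := by
      have := hvs i; simp [List.length_append]; omega
    have h2 : ∀ j, (ws j ++ ([a] ++ vs i)).length ≤ n := by
      intro j; have := hvs i; have := hws j; simp [List.length_append]; omega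
    have := hc ([a] ++ vs i) h1 h2
    simp only [← List.append_assoc] at this
    rw [this]
    simp [hW, mulVec, dotProduct, mul_comm]
  intro v
  induction v using List.reverseRecOn with
  | nil =>
    intro w hw
    simp [wordProd, one_mulVec]
  | append_singleton v' a ih =>
    intro w hw
    have hlen : (w ++ v').length ≤ (n + 1) / 2 := by
      simp [List.length_append] at hw ⊢; omega
    have hstep : wordProd T (v' ++ [a]) = T a * wordProd T v' := by
      simp [wordProd, List.reverse_append]
    rw [hstep, ← mulVec_mulVec, ih w hlen]
    have := key a (w ++ v') (by simp [List.length_append] at hw ⊢; omega)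
    simpa [List.append_assoc] using this
end
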